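/- Fix N ≥ 1 and a routing policy Q (possibly state-dependent) such that the associated continuous-time Markov chain on S_N admits a unique stationary distribution π. Let A_i^{(N)} = π{(E,F) : E_{ii} > 0}. Let (q*, ē*, f̄*, ā*) be an optimal solution of the fluid-based optimization problem with rewards c_{ij} > 0. Then Σ_{i,j} A_i^{(N)} λ_i P_{ij} c_{ij} < Σ_{i,j} ā*_i λ_i P_{ij} c_{ij}; that is, the optimal value of the fluid-based optimization is a strict upper bound on the steady-state utility of the N-car system under any routing policy. -/

import Mathlib

open Finset Filter Topology MeasureTheory

abbrev Mat (r : ℕ) := Fin r → Fin r → ℝ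

/-- The network primitives: per-car arrival rates `lam`, travel rates `mu`,
and the row-stochastic destination matrix `P`. -/
structure NetParams (r : ℕ) where
  lam : Fin r → ℝ
  mu : Mat r
  P : Mat r
  lam_pos : ∀ i, 0 < lam i
  mu_pos : ∀ i j, 0 < mu i j
  P_nonneg : ∀ i j, 0 ≤ P i j
  P_rowsum : ∀ i, ∑ j, P i j = 1

/-- `q` is a routing matrix: nonnegative entries with rows summing to one. -/
def IsRouting {r : ℕ} (q : Mat r) : Prop :=
  (∀ i j, 0 ≤ q i j) ∧ ∀ i, ∑ j, q i j = 1

/-- `(e, f)` belongs to the set 𝒯. -/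
def MemT {r : ℕ} (e f : Mat r) : Prop :=
  (∀ i j, e i j ∈ Set.Icc (0:ℝ) 1) ∧ (∀ i j, f i j ∈ Set.Icc (0:ℝ) 1) ∧
    (∑ i, ∑ j, (e i j + f i j)) = 1

/-- `(q, ebar, fbar, abar)` is feasible for the fluid-based optimization problem. -/
def FluidFeasible {r : ℕ} (np : NetParams r) (q ebar fbar : Mat r)
    (abar : Fin r → ℝ) : Prop :=
  IsRouting q ∧
  (∀ i j, np.lam i * np.P i j * abar i = np.mu i j * fbar i j) ∧
  (∀ i j, i ≠ j → np.mu i j * ebar i j = q i j * ∑ k, np.mu k i * fbar k i) ∧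
  (∀ i, np.lam i * abar i =
    (∑ k ∈ Finset.univ.filter (fun k => k ≠ i), np.mu k i * ebar k i)
      + q i i * ∑ k, np.mu k i * fbar k i) ∧
  (∀ i, (1 - abar i) * ebar i i = 0) ∧
  MemT ebar fbar ∧
  (∀ i, 0 ≤ abar i ∧ abar i ≤ 1)

/-- The objective value `U(ā) = Σ_{i,j} ā_i λ_i P_{ij} c_{ij}`. -/
noncomputable def objU {r : ℕ} (np : NetParams r) (c : Mat r) (abar : Fin r → ℝ) : ℝ :=
  ∑ i, ∑ j, abar i * np.lam i * np.P i j * c i j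

abbrev CMat (r : ℕ) := Fin r → Fin r → ℕ
abbrev NState (r : ℕ) := CMat r × CMat r

def totalCars {r : ℕ} (x : NState r) : ℕ := ∑ i, ∑ j, (x.1 i j + x.2 i j)

noncomputable def scale {r : ℕ} (N : ℕ) (M : CMat r) : Mat r :=
  fun i j => (M i j : ℝ) / N

def incE {r : ℕ} (M : CMat r) (a b : Fin r) : CMat r :=
  fun i j => if i = a ∧ j = b then M i j + 1 else M i j

def decE {r : ℕ} (M : CMat r) (a b : Fin r) : CMat r :=
  fun i j => if i = a ∧ j = b then M i j - 1 else M i j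

/-- Passenger arrives to region `i` and starts a ride from `i` to `j`. -/
def pickupTarget {r : ℕ} (x : NState r) (i j : Fin r) : NState r :=
  (decE x.1 i i, incE x.2 i j)

/-- A full car from `i` drops off its passenger at `j` and the (now empty) car heads to `k`. -/
def dropoffTarget {r : ℕ} (x : NState r) (i j k : Fin r) : NState r :=
  (incE x.1 j k, decE x.2 i j)

/-- An empty car travelling from `i` arrives to region `j ≠ i`. -/
def emptyTarget {r : ℕ} (x : NState r) (i j : Fin r) : NState r :=
  (incE (decE x.1 i j) j j, x.2)

/-- Transition rate of the CTMC from state `x` to state `y`, with `N` cars,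
network parameters `np` and (possibly state-dependent) routing policy `Q`. -/
noncomputable def ctmcRate {r : ℕ} (np : NetParams r) (Q : Mat r → Mat r → Mat r)
    (N : ℕ) (x y : NState r) : ℝ :=
  (∑ i, ∑ j, if 0 < x.1 i i ∧ y = pickupTarget x i j
      then (N : ℝ) * np.lam i * np.P i j else 0)
  + (∑ i, ∑ j, ∑ k, if y = dropoffTarget x i j k
      then np.mu i j * (x.2 i j : ℝ) * Q (scale N x.1) (scale N x.2) j k else 0)
  + (∑ i, ∑ j, if i ≠ j ∧ y = emptyTarget x i j
      then np.mu i j * (x.1 i j : ℝ) else 0)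

/-- `π` is a stationary distribution for the `N`-car CTMC. -/
noncomputable def CtmcIsStationary {r : ℕ} (np : NetParams r) (Q : Mat r → Mat r → Mat r)
    (N : ℕ) (π : NState r → ℝ) : Prop :=
  (∀ x, 0 ≤ π x) ∧
  (∀ x, totalCars x ≠ N → π x = 0) ∧
  (∑' x, π x) = 1 ∧
  ∀ x, (∑' y, π y * ctmcRate np Q N y x) = π x * ∑' y, ctmcRate np Q N x y

/-- Probability of a set of states under `π`. -/
noncomputable def probOf {r : ℕ} (π : NState r → ℝ) (s : Set (NState r)) : ℝ :=
  ∑' x, Set.indicator s π x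

namespace S1


/-- matrices with all entries ≤ N -/
def boundedMats (r N : ℕ) : Finset (CMat r) :=
  (Finset.univ : Finset (Fin r → Fin r → Fin (N+1))).image (fun g i j => (g i j : ℕ))

lemma mem_boundedMats {r N : ℕ} {M : CMat r} (h : ∀ i j, M i j ≤ N) :
    M ∈ boundedMats r N := by
  refine Finset.mem_image.2 ⟨fun i j => ⟨M i j, Nat.lt_succ_of_le (h i j)⟩, Finset.mem_univ _, ?_⟩
  funext i j; simp

/-- the finite state space -/
def SN (r N : ℕ) : Finset (NState r) :=
  ((boundedMats r N) ×ˢ (boundedMats r N)).filter (fun x => totalCars x = N)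

lemma entry_le_total {r : ℕ} (x : NState r) (i j : Fin r) :
    x.1 i j ≤ totalCars x ∧ x.2 i j ≤ totalCars x := by
  constructor <;>
  · refine le_trans ?_ (Finset.single_le_sum (f := fun i => ∑ j, (x.1 i j + x.2 i j))
      (fun _ _ => Nat.zero_le _) (Finset.mem_univ i))
    refine le_trans ?_ (Finset.single_le_sum (f := fun j => (x.1 i j + x.2 i j))
      (fun _ _ => Nat.zero_le _) (Finset.mem_univ j))
    omega

lemma mem_SN {r N : ℕ} {x : NState r} (h : totalCars x = N) : x ∈ SN r N := by
  refine Finset.mem_filter.2 ⟨Finset.mem_product.2 ⟨?_, ?_⟩, h⟩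
  · exact mem_boundedMats (fun i j => h ▸ (entry_le_total x i j).1)
  · exact mem_boundedMats (fun i j => h ▸ (entry_le_total x i j).2)

lemma totalCars_of_mem_SN {r N : ℕ} {x : NState r} (h : x ∈ SN r N) : totalCars x = N :=
  (Finset.mem_filter.1 h).2


end S1

section S1b
namespace S1
variable {r : ℕ}

lemma sum_ite_pair (a b : Fin r) (c : ℕ) :
    (∑ i, ∑ j, if i = a ∧ j = b then c else 0) = c := by
  simp [ite_and, Finset.sum_ite_eq']

lemma sum_incE (M : CMat r) (a b : Fin r) :
    (∑ i, ∑ j, incE M a b i j) = (∑ i, ∑ j, M i j) + 1 := by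
  have : ∀ i j, incE M a b i j = M i j + (if i = a ∧ j = b then 1 else 0) := by
    intro i j; unfold incE; split_ifs <;> simp
  simp only [this, Finset.sum_add_distrib, sum_ite_pair]

lemma sum_decE (M : CMat r) (a b : Fin r) (h : 0 < M a b) :
    (∑ i, ∑ j, decE M a b i j) + 1 = ∑ i, ∑ j, M i j := by
  have : ∀ i j, decE M a b i j + (if i = a ∧ j = b then 1 else 0) = M i j := by
    intro i j; unfold decE; split_ifs with hh
    · obtain ⟨h1, h2⟩ := hh; subst h1; subst h2; omega
    · simp
  calc (∑ i, ∑ j, decE M a b i j) + 1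
      = ∑ i, ∑ j, (decE M a b i j + (if i = a ∧ j = b then 1 else 0)) := by
        simp only [Finset.sum_add_distrib, sum_ite_pair]
    _ = ∑ i, ∑ j, M i j := by simp only [this]

lemma totalCars_pickup (x : NState r) (i j : Fin r) (h : 0 < x.1 i i) :
    totalCars (pickupTarget x i j) = totalCars x := by
  unfold totalCars pickupTarget
  simp only [Finset.sum_add_distrib]
  have h1 := sum_decE x.1 i i h
  have h2 := sum_incE x.2 i j
  omega

lemma totalCars_dropoff (x : NState r) (i j k : Fin r) (h : 0 < x.2 i j) :
    totalCars (dropoffTarget x i j k) = totalCars x := by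
  unfold totalCars dropoffTarget
  simp only [Finset.sum_add_distrib]
  have h1 := sum_incE x.1 j k
  have h2 := sum_decE x.2 i j h
  omega

lemma totalCars_empty (x : NState r) (i j : Fin r) (hij : i ≠ j) (h : 0 < x.1 i j) :
    totalCars (emptyTarget x i j) = totalCars x := by
  unfold totalCars emptyTarget
  simp only [Finset.sum_add_distrib]
  have h1 := sum_decE x.1 i j h
  have h2 := sum_incE (decE x.1 i j) j j
  omega

end S1
end S1b

namespace S1
variable {r : ℕ} (np : NetParams r) (Q : Mat r → Mat r → Mat r) (N : ℕ)

lemma cast_total {x : NState r} :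
    (∑ i, ∑ j, ((x.1 i j + x.2 i j : ℕ):ℝ)) = (totalCars x : ℝ) := by
  unfold totalCars; push_cast; rfl

lemma memT_scale (hN : 1 ≤ N) {x : NState r} (hx : totalCars x = N) :
    MemT (scale N x.1) (scale N x.2) := by
  have hN0 : (0:ℝ) < N := by exact_mod_cast Nat.lt_of_lt_of_le Nat.zero_lt_one hN
  have hb : ∀ (M : CMat r) i j, M i j ≤ totalCars x → scale N M i j ∈ Set.Icc (0:ℝ) 1 := by
    intro M i j h
    unfold scale
    constructor
    · positivity
    · rw [div_le_one hN0]
      exact_mod_cast hx ▸ h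
  refine ⟨fun i j => hb x.1 i j (entry_le_total x i j).1,
    fun i j => hb x.2 i j (entry_le_total x i j).2, ?_⟩
  have h1 : ∀ i j, scale N x.1 i j + scale N x.2 i j = ((x.1 i j + x.2 i j : ℕ) : ℝ) / N := by
    intro i j; unfold scale; push_cast; ring
  simp only [h1]
  simp only [← Finset.sum_div]
  rw [cast_total, hx, div_self (ne_of_gt hN0)]

lemma Qx_routing (hQ : ∀ e f : Mat r, MemT e f → IsRouting (Q e f)) (hN : 1 ≤ N)
    {x : NState r} (hx : totalCars x = N) : IsRouting (Q (scale N x.1) (scale N x.2)) :=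
  hQ _ _ (memT_scale N hN hx)

lemma rate_nonneg (hQ : ∀ e f : Mat r, MemT e f → IsRouting (Q e f)) (hN : 1 ≤ N)
    {x : NState r} (hx : totalCars x = N) (y : NState r) :
    0 ≤ ctmcRate np Q N x y := by
  have hQx := (Qx_routing Q N hQ hN hx).1
  unfold ctmcRate
  refine add_nonneg (add_nonneg ?_ ?_) ?_
  · refine Finset.sum_nonneg fun i _ => Finset.sum_nonneg fun j _ => ?_
    have := np.P_nonneg i j; have := (np.lam_pos i).le
    split_ifs
    · positivity
    · exact le_rfl
  · refine Finset.sum_nonneg fun i _ => Finset.sum_nonneg fun j _ =>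
      Finset.sum_nonneg fun k _ => ?_
    have := (np.mu_pos i j).le; have := hQx j k
    split_ifs
    · positivity
    · exact le_rfl
  · refine Finset.sum_nonneg fun i _ => Finset.sum_nonneg fun j _ => ?_
    have := (np.mu_pos i j).le
    split_ifs
    · positivity
    · exact le_rfl

lemma rate_zero (hN : 1 ≤ N) {x y : NState r} (hx : totalCars x = N)
    (hy : totalCars y ≠ N) : ctmcRate np Q N x y = 0 := by
  unfold ctmcRate
  have h1 : ∀ i j : Fin r, (if 0 < x.1 i i ∧ y = pickupTarget x i j
      then (N : ℝ) * np.lam i * np.P i j else 0) = 0 := by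
    intro i j
    rw [if_neg]
    rintro ⟨hpos, rfl⟩
    exact hy (by rw [totalCars_pickup x i j hpos, hx])
  have h2 : ∀ i j k : Fin r, (if y = dropoffTarget x i j k
      then np.mu i j * (x.2 i j : ℝ) * Q (scale N x.1) (scale N x.2) j k else 0) = 0 := by
    intro i j k
    split_ifs with h
    · rcases Nat.eq_zero_or_pos (x.2 i j) with h0 | h0
      · rw [h0]; ring
      · exact absurd (h ▸ totalCars_dropoff x i j k h0 ▸ hx ▸ rfl : totalCars y = N) hy
    · rfl
  have h3 : ∀ i j : Fin r, (if i ≠ j ∧ y = emptyTarget x i j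
      then np.mu i j * (x.1 i j : ℝ) else 0) = 0 := by
    intro i j
    split_ifs with h
    · rcases Nat.eq_zero_or_pos (x.1 i j) with h0 | h0
      · rw [h0]; ring
      · exact absurd (h.2 ▸ totalCars_empty x i j h.1 h0 ▸ hx ▸ rfl : totalCars y = N) hy
    · rfl
  simp only [h1, h2, h3, Finset.sum_const_zero, add_zero]

end S1

namespace S1
variable {r : ℕ} (np : NetParams r) (Q : Mat r → Mat r → Mat r) (N : ℕ)

lemma sum_ite_target {s : Finset (NState r)} (t : NState r) (v : ℝ) (g : NState r → ℝ)
    (hv : v ≠ 0 → t ∈ s) :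
    (∑ y ∈ s, if y = t then v * g y else 0) = v * g t := by
  rw [Finset.sum_ite_eq' s t (fun y => v * g y)]
  by_cases hv0 : v = 0
  · split_ifs <;> simp [hv0]
  · rw [if_pos (hv hv0)]

lemma sum_rate_mul (hN : 1 ≤ N) {x : NState r} (hx : totalCars x = N) (g : NState r → ℝ) :
    ∑ y ∈ SN r N, ctmcRate np Q N x y * g y
    = (∑ i, ∑ j, if 0 < x.1 i i then (N:ℝ) * np.lam i * np.P i j * g (pickupTarget x i j) else 0)
    + (∑ i, ∑ j, ∑ k, np.mu i j * (x.2 i j : ℝ) * Q (scale N x.1) (scale N x.2) j k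
        * g (dropoffTarget x i j k))
    + (∑ i, ∑ j, if i ≠ j then np.mu i j * (x.1 i j : ℝ) * g (emptyTarget x i j) else 0) := by
  unfold ctmcRate
  simp only [add_mul, Finset.sum_add_distrib, Finset.sum_mul, ite_mul, zero_mul]
  congr 1
  · congr 1
    · -- pickup block
      rw [Finset.sum_comm]
      refine Finset.sum_congr rfl fun i _ => ?_
      rw [Finset.sum_comm]
      refine Finset.sum_congr rfl fun j _ => ?_
      by_cases h : 0 < x.1 i i
      · simp only [h, true_and, if_pos h]
        exact sum_ite_target _ _ g (fun _ => mem_SN (by rw [totalCars_pickup x i j h, hx]))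
      · simp only [h, false_and, if_false, Finset.sum_const_zero]
    · -- dropoff block
      rw [Finset.sum_comm]
      refine Finset.sum_congr rfl fun i _ => ?_
      rw [Finset.sum_comm]
      refine Finset.sum_congr rfl fun j _ => ?_
      rw [Finset.sum_comm]
      refine Finset.sum_congr rfl fun k _ => ?_
      refine sum_ite_target _ _ g (fun hv => ?_)
      rcases Nat.eq_zero_or_pos (x.2 i j) with h0 | h0
      · exact absurd (by rw [h0]; push_cast; ring) hv
      · exact mem_SN (by rw [totalCars_dropoff x i j k h0, hx])
  · -- empty block
    rw [Finset.sum_comm]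
    refine Finset.sum_congr rfl fun i _ => ?_
    rw [Finset.sum_comm]
    refine Finset.sum_congr rfl fun j _ => ?_
    by_cases h : i ≠ j
    · have hcond : ∀ y : NState r, (if i ≠ j ∧ y = emptyTarget x i j
          then np.mu i j * (x.1 i j : ℝ) * g y else 0)
          = (if y = emptyTarget x i j then np.mu i j * (x.1 i j : ℝ) * g y else 0) := by
        intro y; simp [h]
      rw [if_pos h]
      simp only [hcond]
      refine sum_ite_target _ _ g (fun hv => ?_)
      rcases Nat.eq_zero_or_pos (x.1 i j) with h0 | h0
      · exact absurd (by rw [h0]; push_cast; ring) hv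
      · exact mem_SN (by rw [totalCars_empty x i j h h0, hx])
    · simp only [not_not.1 h, ne_eq, not_true_eq_false, false_and, if_false,
        Finset.sum_const_zero]

end S1

namespace S1
variable {r : ℕ} {np : NetParams r} {Q : Mat r → Mat r → Mat r} {N : ℕ} {π : NState r → ℝ}

lemma pi_zero_off (hstat : CtmcIsStationary np Q N π) :
    ∀ x ∉ SN r N, π x = 0 := by
  intro x hx
  exact hstat.2.1 x (fun h => hx (mem_SN h))

lemma sum_pi_one (hstat : CtmcIsStationary np Q N π) : ∑ x ∈ SN r N, π x = 1 := by
  rw [← (tsum_eq_sum (pi_zero_off hstat) : ∑' x, π x = _)]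
  exact hstat.2.2.1

lemma stationary_finite (hstat : CtmcIsStationary np Q N π) (hN : 1 ≤ N)
    {x : NState r} (hx : x ∈ SN r N) :
    ∑ y ∈ SN r N, π y * ctmcRate np Q N y x = π x * ∑ y ∈ SN r N, ctmcRate np Q N x y := by
  have h1 : (∑' y, π y * ctmcRate np Q N y x) = ∑ y ∈ SN r N, π y * ctmcRate np Q N y x :=
    tsum_eq_sum (fun y hy => by rw [pi_zero_off hstat y hy, zero_mul])
  have h2 : (∑' y, ctmcRate np Q N x y) = ∑ y ∈ SN r N, ctmcRate np Q N x y :=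
    tsum_eq_sum (fun y hy => rate_zero np Q N hN (totalCars_of_mem_SN hx)
      (fun h => hy (mem_SN h)))
  rw [← h1, ← h2]
  exact hstat.2.2.2 x

lemma generator (hstat : CtmcIsStationary np Q N π) (hN : 1 ≤ N) (g : NState r → ℝ) :
    ∑ x ∈ SN r N, π x * (∑ y ∈ SN r N, ctmcRate np Q N x y * g y)
    = ∑ x ∈ SN r N, π x * g x * (∑ y ∈ SN r N, ctmcRate np Q N x y) := by
  have lhs : ∑ x ∈ SN r N, π x * (∑ y ∈ SN r N, ctmcRate np Q N x y * g y)
      = ∑ y ∈ SN r N, (∑ x ∈ SN r N, π x * ctmcRate np Q N x y) * g y := by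
    simp only [Finset.mul_sum, Finset.sum_mul]
    rw [Finset.sum_comm]
    exact Finset.sum_congr rfl fun y _ => Finset.sum_congr rfl fun x _ => by ring
  rw [lhs]
  refine Finset.sum_congr rfl fun y hy => ?_
  rw [stationary_finite hstat hN hy]
  ring

end S1

namespace S1
variable {r : ℕ} {np : NetParams r} {Q : Mat r → Mat r → Mat r} {N : ℕ} {π : NState r → ℝ}

lemma sum_ite_pair_real (a b : Fin r) (h : Fin r → Fin r → ℝ) :
    (∑ i, ∑ j, if i = a ∧ j = b then h i j else 0) = h a b := by
  simp [ite_and, Finset.sum_ite_eq']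

lemma gen_drift (hstat : CtmcIsStationary np Q N π) (hN : 1 ≤ N) (g : NState r → ℝ)
    (D : NState r → ℝ)
    (hD : ∀ x ∈ SN r N, (∑ y ∈ SN r N, ctmcRate np Q N x y * g y)
      - g x * (∑ y ∈ SN r N, ctmcRate np Q N x y) = D x) :
    ∑ x ∈ SN r N, π x * D x = 0 := by
  have hgen := generator hstat hN g
  have : ∑ x ∈ SN r N, π x * D x
      = ∑ x ∈ SN r N, (π x * (∑ y ∈ SN r N, ctmcRate np Q N x y * g y)
        - π x * g x * (∑ y ∈ SN r N, ctmcRate np Q N x y)) := by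
    refine Finset.sum_congr rfl fun x hx => ?_
    rw [← hD x hx]; ring
  rw [this, Finset.sum_sub_distrib, hgen, sub_self]

/-- The drift identity for the test function `F a b`. -/
lemma identity_F (hstat : CtmcIsStationary np Q N π)
    (hQ : ∀ e f : Mat r, MemT e f → IsRouting (Q e f)) (hN : 1 ≤ N) (a b : Fin r) :
    ∑ x ∈ SN r N, π x * ((if 0 < x.1 a a then (N:ℝ) * np.lam a * np.P a b else 0)
      - np.mu a b * (x.2 a b : ℝ)) = 0 := by
  refine gen_drift hstat hN (fun y => (y.2 a b : ℝ)) _ (fun x hx => ?_)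
  have hxN := totalCars_of_mem_SN hx
  rw [sum_rate_mul np Q N hN hxN,
    show (∑ y ∈ SN r N, ctmcRate np Q N x y) = ∑ y ∈ SN r N, ctmcRate np Q N x y * 1 by
      simp,
    sum_rate_mul np Q N hN hxN (fun _ => (1:ℝ))]
  simp only [mul_one]
  have hrow := (Qx_routing Q N hQ hN hxN).2
  -- group the three blocks
  have key : ∀ (A1 A2 B1 B2 C1 C2 R1 R2 R3 : ℝ), A1 - (x.2 a b:ℝ) * A2 = R1 →
      B1 - (x.2 a b:ℝ) * B2 = R2 → C1 - (x.2 a b:ℝ) * C2 = R3 →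
      A1 + B1 + C1 - (x.2 a b:ℝ) * (A2 + B2 + C2) = R1 + R2 + R3 := by
    intro A1 A2 B1 B2 C1 C2 R1 R2 R3 h1 h2 h3
    rw [← h1, ← h2, ← h3]; ring
  have hA : (∑ i, ∑ j, if 0 < x.1 i i
        then (N:ℝ) * np.lam i * np.P i j * ((pickupTarget x i j).2 a b : ℝ) else 0)
      - (x.2 a b:ℝ) * (∑ i, ∑ j, if 0 < x.1 i i then (N:ℝ) * np.lam i * np.P i j else 0)
      = (if 0 < x.1 a a then (N:ℝ) * np.lam a * np.P a b else 0) := by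
    rw [Finset.mul_sum]
    simp only [Finset.mul_sum, ← Finset.sum_sub_distrib]
    have : ∀ i j : Fin r, ((if 0 < x.1 i i
          then (N:ℝ) * np.lam i * np.P i j * ((pickupTarget x i j).2 a b : ℝ) else 0)
        - (x.2 a b:ℝ) * (if 0 < x.1 i i then (N:ℝ) * np.lam i * np.P i j else 0))
        = (if i = a ∧ j = b then (if 0 < x.1 a a then (N:ℝ) * np.lam a * np.P a b else 0)
            else 0) := by
      intro i j
      show (if 0 < x.1 i i
          then (N:ℝ) * np.lam i * np.P i j * ((incE x.2 i j a b : ℕ) : ℝ) else 0)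
        - (x.2 a b:ℝ) * (if 0 < x.1 i i then (N:ℝ) * np.lam i * np.P i j else 0) = _
      unfold incE
      by_cases hab : i = a ∧ j = b
      · simp only [hab.1, hab.2, and_self, if_true]
        split_ifs with h
        · push_cast; ring
        · ring
      · have : ¬(a = i ∧ b = j) := fun ⟨h1, h2⟩ => hab ⟨h1.symm, h2.symm⟩
        rw [if_neg this, if_neg hab]
        split_ifs <;> ring
    simp only [this, sum_ite_pair_real]
  have hB : (∑ i, ∑ j, ∑ k, np.mu i j * (x.2 i j : ℝ) * Q (scale N x.1) (scale N x.2) j k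
        * ((dropoffTarget x i j k).2 a b : ℝ))
      - (x.2 a b:ℝ) * (∑ i, ∑ j, ∑ k,
          np.mu i j * (x.2 i j : ℝ) * Q (scale N x.1) (scale N x.2) j k)
      = - (np.mu a b * (x.2 a b : ℝ)) := by
    simp only [Finset.mul_sum, ← Finset.sum_sub_distrib]
    have : ∀ i j k : Fin r, (np.mu i j * (x.2 i j : ℝ) * Q (scale N x.1) (scale N x.2) j k
          * ((dropoffTarget x i j k).2 a b : ℝ)
        - (x.2 a b:ℝ) * (np.mu i j * (x.2 i j : ℝ) * Q (scale N x.1) (scale N x.2) j k))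
        = (if i = a ∧ j = b
            then -(np.mu a b * (x.2 a b : ℝ) * Q (scale N x.1) (scale N x.2) b k) else 0) := by
      intro i j k
      show np.mu i j * (x.2 i j : ℝ) * Q (scale N x.1) (scale N x.2) j k
          * ((decE x.2 i j a b : ℕ) : ℝ) - _ = _
      unfold decE
      by_cases hab : i = a ∧ j = b
      · simp only [hab.1, hab.2, and_self, if_true]
        rcases Nat.eq_zero_or_pos (x.2 a b) with h0 | h0
        · rw [h0]; push_cast; ring
        · rw [Nat.cast_sub h0]; push_cast; ring
      · have : ¬(a = i ∧ b = j) := fun ⟨h1, h2⟩ => hab ⟨h1.symm, h2.symm⟩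
        rw [if_neg this, if_neg hab]
        ring
    simp only [this]
    have hik : ∀ i j : Fin r, (∑ k, if i = a ∧ j = b
          then -(np.mu a b * (x.2 a b : ℝ) * Q (scale N x.1) (scale N x.2) b k) else 0)
        = (if i = a ∧ j = b
          then -(np.mu a b * (x.2 a b : ℝ)
            * ∑ k, Q (scale N x.1) (scale N x.2) b k) else 0) := by
      intro i j
      split_ifs
      · rw [Finset.mul_sum, ← Finset.sum_neg_distrib]
      · exact Finset.sum_const_zero
    simp only [hik, hrow b, mul_one, sum_ite_pair_real]
  have hC : (∑ i, ∑ j, if i ≠ j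
        then np.mu i j * (x.1 i j : ℝ) * ((emptyTarget x i j).2 a b : ℝ) else 0)
      - (x.2 a b:ℝ) * (∑ i, ∑ j, if i ≠ j then np.mu i j * (x.1 i j : ℝ) else 0)
      = 0 := by
    simp only [Finset.mul_sum, ← Finset.sum_sub_distrib]
    have : ∀ i j : Fin r, ((if i ≠ j
          then np.mu i j * (x.1 i j : ℝ) * ((emptyTarget x i j).2 a b : ℝ) else 0)
        - (x.2 a b:ℝ) * (if i ≠ j then np.mu i j * (x.1 i j : ℝ) else 0)) = 0 := by
      intro i j
      show (if i ≠ j then np.mu i j * (x.1 i j : ℝ) * ((x.2 a b : ℕ):ℝ) else 0) - _ = 0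
      split_ifs <;> ring
    simp only [this, Finset.sum_const_zero]
  exact (key _ _ _ _ _ _ _ _ _ hA hB hC).trans (by ring)

end S1

namespace S1
variable {r : ℕ} {np : NetParams r} {Q : Mat r → Mat r → Mat r} {N : ℕ} {π : NState r → ℝ}

lemma key3 {t : ℝ} : ∀ (A1 A2 B1 B2 C1 C2 R1 R2 R3 : ℝ), A1 - t * A2 = R1 →
    B1 - t * B2 = R2 → C1 - t * C2 = R3 →
    A1 + B1 + C1 - t * (A2 + B2 + C2) = R1 + R2 + R3 := by
  intro A1 A2 B1 B2 C1 C2 R1 R2 R3 h1 h2 h3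
  rw [← h1, ← h2, ← h3]; ring

/-- dropoff block for the test function `E a b` -/
lemma blockB_E {x : NState r} (a b : Fin r) :
    (∑ i, ∑ j, ∑ k, np.mu i j * (x.2 i j : ℝ) * Q (scale N x.1) (scale N x.2) j k
        * ((dropoffTarget x i j k).1 a b : ℝ))
      - (x.1 a b:ℝ) * (∑ i, ∑ j, ∑ k,
          np.mu i j * (x.2 i j : ℝ) * Q (scale N x.1) (scale N x.2) j k)
      = ∑ i, np.mu i a * (x.2 i a : ℝ) * Q (scale N x.1) (scale N x.2) a b := by
  simp only [Finset.mul_sum, ← Finset.sum_sub_distrib]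
  have : ∀ i j k : Fin r, (np.mu i j * (x.2 i j : ℝ) * Q (scale N x.1) (scale N x.2) j k
        * ((dropoffTarget x i j k).1 a b : ℝ)
      - (x.1 a b:ℝ) * (np.mu i j * (x.2 i j : ℝ) * Q (scale N x.1) (scale N x.2) j k))
      = (if j = a ∧ k = b
          then np.mu i a * (x.2 i a : ℝ) * Q (scale N x.1) (scale N x.2) a b else 0) := by
    intro i j k
    show np.mu i j * (x.2 i j : ℝ) * Q (scale N x.1) (scale N x.2) j k
        * ((incE x.1 j k a b : ℕ) : ℝ) - _ = _
    unfold incE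
    by_cases hab : j = a ∧ k = b
    · simp only [hab.1, hab.2, and_self, if_true]
      push_cast; ring
    · have : ¬(a = j ∧ b = k) := fun ⟨h1, h2⟩ => hab ⟨h1.symm, h2.symm⟩
      rw [if_neg this, if_neg hab]
      ring
  simp only [this]
  refine Finset.sum_congr rfl fun i _ => ?_
  exact sum_ite_pair_real a b _

/-- The drift identity for the test function `E a b`, off-diagonal case. -/
lemma identity_Eoff (hstat : CtmcIsStationary np Q N π)
    (hQ : ∀ e f : Mat r, MemT e f → IsRouting (Q e f)) (hN : 1 ≤ N)
    (a b : Fin r) (hab : a ≠ b) :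
    ∑ x ∈ SN r N, π x * ((∑ i, np.mu i a * (x.2 i a : ℝ)
        * Q (scale N x.1) (scale N x.2) a b)
      - np.mu a b * (x.1 a b : ℝ)) = 0 := by
  refine gen_drift hstat hN (fun y => (y.1 a b : ℝ)) _ (fun x hx => ?_)
  have hxN := totalCars_of_mem_SN hx
  rw [sum_rate_mul np Q N hN hxN,
    show (∑ y ∈ SN r N, ctmcRate np Q N x y) = ∑ y ∈ SN r N, ctmcRate np Q N x y * 1 by
      simp,
    sum_rate_mul np Q N hN hxN (fun _ => (1:ℝ))]
  simp only [mul_one]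
  have hA : (∑ i, ∑ j, if 0 < x.1 i i
        then (N:ℝ) * np.lam i * np.P i j * ((pickupTarget x i j).1 a b : ℝ) else 0)
      - (x.1 a b:ℝ) * (∑ i, ∑ j, if 0 < x.1 i i then (N:ℝ) * np.lam i * np.P i j else 0)
      = 0 := by
    simp only [Finset.mul_sum, ← Finset.sum_sub_distrib]
    have : ∀ i j : Fin r, ((if 0 < x.1 i i
          then (N:ℝ) * np.lam i * np.P i j * ((pickupTarget x i j).1 a b : ℝ) else 0)
        - (x.1 a b:ℝ) * (if 0 < x.1 i i then (N:ℝ) * np.lam i * np.P i j else 0)) = 0 := by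
      intro i j
      show (if 0 < x.1 i i
          then (N:ℝ) * np.lam i * np.P i j * ((decE x.1 i i a b : ℕ) : ℝ) else 0) - _ = 0
      unfold decE
      have : ¬(a = i ∧ b = i) := fun ⟨h1, h2⟩ => hab (h1.trans h2.symm)
      rw [if_neg this]
      split_ifs <;> ring
    simp only [this, Finset.sum_const_zero]
  have hC : (∑ i, ∑ j, if i ≠ j
        then np.mu i j * (x.1 i j : ℝ) * ((emptyTarget x i j).1 a b : ℝ) else 0)
      - (x.1 a b:ℝ) * (∑ i, ∑ j, if i ≠ j then np.mu i j * (x.1 i j : ℝ) else 0)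
      = -(np.mu a b * (x.1 a b : ℝ)) := by
    simp only [Finset.mul_sum, ← Finset.sum_sub_distrib]
    have : ∀ i j : Fin r, ((if i ≠ j
          then np.mu i j * (x.1 i j : ℝ) * ((emptyTarget x i j).1 a b : ℝ) else 0)
        - (x.1 a b:ℝ) * (if i ≠ j then np.mu i j * (x.1 i j : ℝ) else 0))
        = (if i = a ∧ j = b then -(np.mu a b * (x.1 a b : ℝ)) else 0) := by
      intro i j
      show (if i ≠ j then np.mu i j * (x.1 i j : ℝ)
          * ((incE (decE x.1 i j) j j a b : ℕ) : ℝ) else 0) - _ = _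
      unfold incE decE
      by_cases hij : i = a ∧ j = b
      · simp only [hij.1, hij.2, and_true, true_and, and_self, if_true]
        rw [if_neg hab, if_pos (show a ≠ b from hab), if_pos (show a ≠ b from hab)]
        rcases Nat.eq_zero_or_pos (x.1 a b) with h0 | h0
        · rw [h0]; push_cast; ring
        · rw [Nat.cast_sub h0]; push_cast; ring
      · rw [if_neg hij]
        have h1 : ((if a = j ∧ b = j then (if a = i ∧ b = j then x.1 a b - 1 else x.1 a b) + 1
              else (if a = i ∧ b = j then x.1 a b - 1 else x.1 a b)) : ℕ) = x.1 a b := by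
          have hd : ¬(a = i ∧ b = j) := fun ⟨u, v⟩ => hij ⟨u.symm, v.symm⟩
          have he : ¬(a = j ∧ b = j) := fun ⟨u, v⟩ => hab (u.trans v.symm)
          rw [if_neg he, if_neg hd]
        rw [h1]
        by_cases hne : i ≠ j
        · rw [if_pos hne, if_pos hne]; ring
        · rw [if_neg hne, if_neg hne]; ring
    simp only [this, sum_ite_pair_real]
  exact (key3 _ _ _ _ _ _ _ _ _ hA (blockB_E a b) hC).trans (by ring)

end S1

namespace S1
variable {r : ℕ} {np : NetParams r} {Q : Mat r → Mat r → Mat r} {N : ℕ} {π : NState r → ℝ}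

/-- The drift identity for the test function `E a a`. -/
lemma identity_Ediag (hstat : CtmcIsStationary np Q N π)
    (hQ : ∀ e f : Mat r, MemT e f → IsRouting (Q e f)) (hN : 1 ≤ N) (a : Fin r) :
    ∑ x ∈ SN r N, π x * ((∑ i, np.mu i a * (x.2 i a : ℝ)
        * Q (scale N x.1) (scale N x.2) a a)
      + (∑ i ∈ Finset.univ.filter (fun i => i ≠ a), np.mu i a * (x.1 i a : ℝ))
      - (if 0 < x.1 a a then (N:ℝ) * np.lam a else 0)) = 0 := by
  refine gen_drift hstat hN (fun y => (y.1 a a : ℝ)) _ (fun x hx => ?_)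
  have hxN := totalCars_of_mem_SN hx
  rw [sum_rate_mul np Q N hN hxN,
    show (∑ y ∈ SN r N, ctmcRate np Q N x y) = ∑ y ∈ SN r N, ctmcRate np Q N x y * 1 by
      simp,
    sum_rate_mul np Q N hN hxN (fun _ => (1:ℝ))]
  simp only [mul_one]
  have hA : (∑ i, ∑ j, if 0 < x.1 i i
        then (N:ℝ) * np.lam i * np.P i j * ((pickupTarget x i j).1 a a : ℝ) else 0)
      - (x.1 a a:ℝ) * (∑ i, ∑ j, if 0 < x.1 i i then (N:ℝ) * np.lam i * np.P i j else 0)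
      = -(if 0 < x.1 a a then (N:ℝ) * np.lam a else 0) := by
    simp only [Finset.mul_sum, ← Finset.sum_sub_distrib]
    have hterm : ∀ i j : Fin r, ((if 0 < x.1 i i
          then (N:ℝ) * np.lam i * np.P i j * ((pickupTarget x i j).1 a a : ℝ) else 0)
        - (x.1 a a:ℝ) * (if 0 < x.1 i i then (N:ℝ) * np.lam i * np.P i j else 0))
        = (if i = a then (if 0 < x.1 a a then -((N:ℝ) * np.lam a * np.P a j) else 0)
            else 0) := by
      intro i j
      show (if 0 < x.1 i i
          then (N:ℝ) * np.lam i * np.P i j * ((decE x.1 i i a a : ℕ) : ℝ) else 0) - _ = _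
      unfold decE
      by_cases hia : i = a
      · simp only [hia, and_self, if_true]
        split_ifs with h
        · rw [Nat.cast_sub h]; push_cast; ring
        · ring
      · have : ¬(a = i ∧ a = i) := fun h => hia h.1.symm
        rw [if_neg this, if_neg hia]
        split_ifs <;> ring
    simp only [hterm]
    have hpull : ∀ i : Fin r, (∑ j, if i = a
          then (if 0 < x.1 a a then -((N:ℝ) * np.lam a * np.P a j) else 0) else 0)
        = (if i = a then (if 0 < x.1 a a then -((N:ℝ) * np.lam a) else 0) else 0) := by
      intro i
      split_ifs with h1 h2
      · calc (∑ j, -((N:ℝ) * np.lam a * np.P a j))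
            = -∑ j, (N:ℝ) * np.lam a * np.P a j := by rw [Finset.sum_neg_distrib]
          _ = -((N:ℝ) * np.lam a) := by rw [← Finset.mul_sum, np.P_rowsum, mul_one]
      · exact Finset.sum_const_zero
      · exact Finset.sum_const_zero
    simp only [hpull, Finset.sum_ite_eq' Finset.univ a, Finset.mem_univ, if_true]
    split_ifs <;> ring
  have hC : (∑ i, ∑ j, if i ≠ j
        then np.mu i j * (x.1 i j : ℝ) * ((emptyTarget x i j).1 a a : ℝ) else 0)
      - (x.1 a a:ℝ) * (∑ i, ∑ j, if i ≠ j then np.mu i j * (x.1 i j : ℝ) else 0)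
      = ∑ i ∈ Finset.univ.filter (fun i => i ≠ a), np.mu i a * (x.1 i a : ℝ) := by
    simp only [Finset.mul_sum, ← Finset.sum_sub_distrib]
    have hterm : ∀ i j : Fin r, ((if i ≠ j
          then np.mu i j * (x.1 i j : ℝ) * ((emptyTarget x i j).1 a a : ℝ) else 0)
        - (x.1 a a:ℝ) * (if i ≠ j then np.mu i j * (x.1 i j : ℝ) else 0))
        = (if j = a then (if i ≠ a then np.mu i a * (x.1 i a : ℝ) else 0) else 0) := by
      intro i j
      show (if i ≠ j then np.mu i j * (x.1 i j : ℝ)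
          * ((incE (decE x.1 i j) j j a a : ℕ) : ℝ) else 0) - _ = _
      unfold incE decE
      by_cases hja : j = a
      · simp only [hja, and_self, if_true, and_true, true_and]
        by_cases hia : i = a
        · simp only [hia, ne_eq, not_true_eq_false, false_and, if_false]
          ring
        · have h1 : ¬(a = i) := fun h => hia h.symm
          rw [if_neg h1]
          simp only [ne_eq, hia, not_false_eq_true, if_true]
          push_cast; ring
      · have h1 : ¬(a = j ∧ a = j) := fun h => hja h.1.symm
        have h2 : ¬(a = i ∧ a = j) := fun h => hja h.2.symm
        rw [if_neg h1, if_neg h2, if_neg hja]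
        by_cases hne : i ≠ j
        · rw [if_pos hne, if_pos hne]; ring
        · rw [if_neg hne, if_neg hne]; ring
    simp only [hterm]
    have hpull : ∀ i : Fin r, (∑ j, if j = a
          then (if i ≠ a then np.mu i a * (x.1 i a : ℝ) else 0) else 0)
        = (if i ≠ a then np.mu i a * (x.1 i a : ℝ) else 0) := by
      intro i
      rw [Finset.sum_ite_eq' Finset.univ a, if_pos (Finset.mem_univ a)]
    simp only [hpull]
    rw [Finset.sum_filter]
  exact (key3 _ _ _ _ _ _ _ _ _ hA (blockB_E a a) hC).trans (by ring)

end S1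

namespace S1
variable {r : ℕ} {np : NetParams r} {Q : Mat r → Mat r → Mat r} {N : ℕ} {π : NState r → ℝ}

lemma pi_total (hstat : CtmcIsStationary np Q N π) {x : NState r} (hx : 0 < π x) :
    totalCars x = N := by
  by_contra h
  rw [hstat.2.1 x h] at hx
  exact lt_irrefl 0 hx

lemma support_closed (hstat : CtmcIsStationary np Q N π)
    (hQ : ∀ e f : Mat r, MemT e f → IsRouting (Q e f)) (hN : 1 ≤ N)
    {x y : NState r} (hx : 0 < π x) (hrate : 0 < ctmcRate np Q N x y) : 0 < π y := by
  have hxN : totalCars x = N := pi_total hstat hx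
  have hyN : totalCars y = N := by
    by_contra h
    rw [rate_zero np Q N hN hxN h] at hrate
    exact lt_irrefl 0 hrate
  have hySN : y ∈ SN r N := mem_SN hyN
  have hbal := stationary_finite hstat hN hySN
  have hpos : 0 < ∑ z ∈ SN r N, π z * ctmcRate np Q N z y := by
    refine lt_of_lt_of_le (mul_pos hx hrate) ?_
    refine Finset.single_le_sum (f := fun z => π z * ctmcRate np Q N z y)
      (fun z hz => mul_nonneg (hstat.1 z)
        (rate_nonneg np Q N hQ hN (totalCars_of_mem_SN hz) y)) (mem_SN hxN)
  rw [hbal] at hpos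
  rcases lt_or_eq_of_le (hstat.1 y) with h | h
  · exact h
  · rw [← h, zero_mul] at hpos
    exact absurd hpos (lt_irrefl 0)

lemma exists_pos (hstat : CtmcIsStationary np Q N π) : ∃ x, 0 < π x := by
  by_contra h
  push_neg at h
  have hz : ∀ x, π x = 0 := fun x => le_antisymm (h x) (hstat.1 x)
  have h1 := hstat.2.2.1
  simp only [hz, tsum_zero] at h1
  norm_num at h1

lemma exists_diag_zero (hstat : CtmcIsStationary np Q N π)
    (hQ : ∀ e f : Mat r, MemT e f → IsRouting (Q e f)) (hN : 1 ≤ N) (a : Fin r) :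
    ∃ y, 0 < π y ∧ y.1 a a = 0 := by
  obtain ⟨x0, hx0⟩ := exists_pos hstat
  suffices h : ∀ n (x : NState r), 0 < π x → x.1 a a = n → ∃ y, 0 < π y ∧ y.1 a a = 0 by
    exact h _ x0 hx0 rfl
  intro n
  induction n with
  | zero => exact fun x hx h0 => ⟨x, hx, h0⟩
  | succ m ih =>
    intro x hx hm
    have hxa : 0 < x.1 a a := by omega
    obtain ⟨j, hj⟩ : ∃ j, 0 < np.P a j := by
      by_contra h
      push_neg at h
      have : ∀ j, np.P a j = 0 := fun j => le_antisymm (h j) (np.P_nonneg a j)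
      have hs := np.P_rowsum a
      simp only [this, Finset.sum_const_zero] at hs
      norm_num at hs
    have hxN : totalCars x = N := pi_total hstat hx
    set y := pickupTarget x a j with hy
    have hrate : 0 < ctmcRate np Q N x y := by
      have hterm : (0:ℝ) < (N:ℝ) * np.lam a * np.P a j := by
        have : (0:ℝ) < N := by exact_mod_cast Nat.lt_of_lt_of_le Nat.zero_lt_one hN
        have := np.lam_pos a
        positivity
      have h1 : ((N:ℝ) * np.lam a * np.P a j)
          ≤ ∑ i, ∑ j', if 0 < x.1 i i ∧ y = pickupTarget x i j'
            then (N : ℝ) * np.lam i * np.P i j' else 0 := by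
        have hnn : ∀ i j' : Fin r, (0:ℝ) ≤ if 0 < x.1 i i ∧ y = pickupTarget x i j'
            then (N : ℝ) * np.lam i * np.P i j' else 0 := by
          intro i j'
          have := (np.lam_pos i).le; have := np.P_nonneg i j'
          split_ifs
          · positivity
          · exact le_rfl
        calc ((N:ℝ) * np.lam a * np.P a j)
            = (if 0 < x.1 a a ∧ y = pickupTarget x a j
                then (N : ℝ) * np.lam a * np.P a j else 0) := by rw [if_pos ⟨hxa, rfl⟩]
          _ ≤ ∑ j', if 0 < x.1 a a ∧ y = pickupTarget x a j'
                then (N : ℝ) * np.lam a * np.P a j' else 0 :=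
              Finset.single_le_sum (fun j' _ => hnn a j') (Finset.mem_univ j)
          _ ≤ _ := Finset.single_le_sum
              (f := fun i => ∑ j', if 0 < x.1 i i ∧ y = pickupTarget x i j'
                then (N : ℝ) * np.lam i * np.P i j' else 0)
              (fun i _ => Finset.sum_nonneg fun j' _ => hnn i j') (Finset.mem_univ a)
      have h2 : (0:ℝ) ≤ ∑ i, ∑ j', ∑ k, if y = dropoffTarget x i j' k
          then np.mu i j' * (x.2 i j' : ℝ) * Q (scale N x.1) (scale N x.2) j' k else 0 := by
        refine Finset.sum_nonneg fun i _ => Finset.sum_nonneg fun j' _ =>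
          Finset.sum_nonneg fun k _ => ?_
        have := (np.mu_pos i j').le
        have := (Qx_routing Q N hQ hN hxN).1 j' k
        split_ifs
        · positivity
        · exact le_rfl
      have h3 : (0:ℝ) ≤ ∑ i, ∑ j', if i ≠ j' ∧ y = emptyTarget x i j'
          then np.mu i j' * (x.1 i j' : ℝ) else 0 := by
        refine Finset.sum_nonneg fun i _ => Finset.sum_nonneg fun j' _ => ?_
        have := (np.mu_pos i j').le
        split_ifs
        · positivity
        · exact le_rfl
      unfold ctmcRate
      have := lt_of_lt_of_le hterm h1
      linarith
    have hyp : 0 < π y := support_closed hstat hQ hN hx hrate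
    have hya : y.1 a a = m := by
      show decE x.1 a a a a = m
      unfold decE
      rw [if_pos ⟨rfl, rfl⟩]
      omega
    exact ih y hyp hya

/-- steady-state probability that region `a` has an idle car, as a finite sum -/
noncomputable def Abar (r N : ℕ) (π : NState r → ℝ) (a : Fin r) : ℝ :=
  ∑ x ∈ SN r N, π x * (if 0 < x.1 a a then 1 else 0)

lemma Abar_nonneg (hstat : CtmcIsStationary np Q N π) (a : Fin r) : 0 ≤ Abar r N π a :=
  Finset.sum_nonneg fun x _ => mul_nonneg (hstat.1 x) (by split_ifs <;> norm_num)

lemma Abar_le (hstat : CtmcIsStationary np Q N π) (a : Fin r) : Abar r N π a ≤ 1 := by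
  rw [← sum_pi_one hstat]
  refine Finset.sum_le_sum fun x _ => ?_
  rcases le_or_gt (π x) 0 with h | h
  · have : π x = 0 := le_antisymm h (hstat.1 x)
    rw [this]; simp
  · nlinarith [h, (by split_ifs <;> norm_num : (if 0 < x.1 a a then (1:ℝ) else 0) ≤ 1)]

lemma Abar_lt_one (hstat : CtmcIsStationary np Q N π)
    (hQ : ∀ e f : Mat r, MemT e f → IsRouting (Q e f)) (hN : 1 ≤ N) (a : Fin r) :
    Abar r N π a < 1 := by
  obtain ⟨y, hy, hy0⟩ := exists_diag_zero hstat hQ hN a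
  have hySN : y ∈ SN r N := mem_SN (pi_total hstat hy)
  have hfy : π y * (if 0 < y.1 a a then (1:ℝ) else 0) = 0 := by
    rw [hy0]; simp
  have h1 : Abar r N π a = ∑ x ∈ (SN r N).erase y, π x * (if 0 < x.1 a a then 1 else 0) := by
    rw [Abar, ← Finset.sum_erase_add _ _ hySN, hfy, add_zero]
  have h2 : ∑ x ∈ (SN r N).erase y, π x * (if 0 < x.1 a a then (1:ℝ) else 0)
      ≤ ∑ x ∈ (SN r N).erase y, π x := by
    refine Finset.sum_le_sum fun x _ => ?_
    rcases le_or_gt (π x) 0 with h | h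
    · rw [le_antisymm h (hstat.1 x)]; simp
    · nlinarith [(by split_ifs <;> norm_num : (if 0 < x.1 a a then (1:ℝ) else 0) ≤ 1)]
  have h3 : ∑ x ∈ (SN r N).erase y, π x = 1 - π y := by
    have := Finset.sum_erase_add (SN r N) π hySN
    rw [sum_pi_one hstat] at this
    linarith
  rw [h1]
  calc ∑ x ∈ (SN r N).erase y, π x * (if 0 < x.1 a a then (1:ℝ) else 0)
      ≤ 1 - π y := h2.trans h3.le
    _ < 1 := by linarith

end S1

namespace S1
variable {r : ℕ} {np : NetParams r} {Q : Mat r → Mat r → Mat r} {N : ℕ} {π : NState r → ℝ}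

noncomputable def ebarN (r N : ℕ) (π : NState r → ℝ) : Mat r :=
  fun i j => (∑ x ∈ SN r N, π x * (x.1 i j : ℝ)) / N

noncomputable def fbarN (r N : ℕ) (π : NState r → ℝ) : Mat r :=
  fun i j => (∑ x ∈ SN r N, π x * (x.2 i j : ℝ)) / N

noncomputable def GN (np : NetParams r) (Q : Mat r → Mat r → Mat r) (N : ℕ)
    (π : NState r → ℝ) (a b : Fin r) : ℝ :=
  (∑ x ∈ SN r N, π x * ∑ i, np.mu i a * (x.2 i a : ℝ)
    * Q (scale N x.1) (scale N x.2) a b) / N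

noncomputable def DN (np : NetParams r) (N : ℕ) (π : NState r → ℝ) (a : Fin r) : ℝ :=
  ∑ k, np.mu k a * fbarN r N π k a

noncomputable def qN (np : NetParams r) (Q : Mat r → Mat r → Mat r) (N : ℕ)
    (π : NState r → ℝ) (a b : Fin r) : ℝ :=
  if DN np N π a = 0 then (if a = b then 1 else 0) else GN np Q N π a b / DN np N π a

section Identities
variable (hstat : CtmcIsStationary np Q N π)
  (hQ : ∀ e f : Mat r, MemT e f → IsRouting (Q e f)) (hN : 1 ≤ N)
include hstat hQ hN

lemma hNpos : (0:ℝ) < N := by exact_mod_cast Nat.lt_of_lt_of_le Nat.zero_lt_one hN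

lemma L1 (a b : Fin r) :
    np.lam a * np.P a b * Abar r N π a = np.mu a b * fbarN r N π a b := by
  have h := identity_F hstat hQ hN a b
  have e1 : ∑ x ∈ SN r N, π x * ((if 0 < x.1 a a then (N:ℝ) * np.lam a * np.P a b else 0)
      - np.mu a b * (x.2 a b : ℝ))
      = (N:ℝ) * np.lam a * np.P a b * Abar r N π a
        - np.mu a b * (∑ x ∈ SN r N, π x * (x.2 a b : ℝ)) := by
    rw [Abar, Finset.mul_sum, Finset.mul_sum, ← Finset.sum_sub_distrib]
    refine Finset.sum_congr rfl fun x _ => ?_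
    split_ifs <;> ring
  rw [e1] at h
  have hfN : (∑ x ∈ SN r N, π x * (x.2 a b : ℝ)) = (N:ℝ) * fbarN r N π a b := by
    rw [fbarN, mul_div_cancel₀]
    exact ne_of_gt (hNpos hstat hQ hN)
  rw [hfN] at h
  have hN0 : (N:ℝ) ≠ 0 := ne_of_gt (hNpos hstat hQ hN)
  have : (N:ℝ) * (np.lam a * np.P a b * Abar r N π a - np.mu a b * fbarN r N π a b) = 0 := by
    linarith
  rcases mul_eq_zero.1 this with h0 | h0
  · exact absurd h0 hN0
  · linarith

lemma L2 (a b : Fin r) (hab : a ≠ b) :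
    np.mu a b * ebarN r N π a b = GN np Q N π a b := by
  have h := identity_Eoff hstat hQ hN a b hab
  have e1 : ∑ x ∈ SN r N, π x * ((∑ i, np.mu i a * (x.2 i a : ℝ)
        * Q (scale N x.1) (scale N x.2) a b) - np.mu a b * (x.1 a b : ℝ))
      = (N:ℝ) * GN np Q N π a b - np.mu a b * ((N:ℝ) * ebarN r N π a b) := by
    rw [GN, ebarN, mul_div_cancel₀ _ (ne_of_gt (hNpos hstat hQ hN)),
      mul_div_cancel₀ _ (ne_of_gt (hNpos hstat hQ hN)), Finset.mul_sum,
      ← Finset.sum_sub_distrib]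
    refine Finset.sum_congr rfl fun x _ => ?_
    ring
  rw [e1] at h
  have hN0 : (N:ℝ) ≠ 0 := ne_of_gt (hNpos hstat hQ hN)
  have : (N:ℝ) * (np.mu a b * ebarN r N π a b - GN np Q N π a b) = 0 := by linarith
  rcases mul_eq_zero.1 this with h0 | h0
  · exact absurd h0 hN0
  · linarith

lemma L3 (a : Fin r) :
    np.lam a * Abar r N π a = GN np Q N π a a
      + ∑ k ∈ Finset.univ.filter (fun k => k ≠ a), np.mu k a * ebarN r N π k a := by
  have h := identity_Ediag hstat hQ hN a
  have e1 : ∑ x ∈ SN r N, π x * ((∑ i, np.mu i a * (x.2 i a : ℝ)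
        * Q (scale N x.1) (scale N x.2) a a)
      + (∑ i ∈ Finset.univ.filter (fun i => i ≠ a), np.mu i a * (x.1 i a : ℝ))
      - (if 0 < x.1 a a then (N:ℝ) * np.lam a else 0))
      = (N:ℝ) * GN np Q N π a a
        + (∑ i ∈ Finset.univ.filter (fun i => i ≠ a),
            np.mu i a * ((N:ℝ) * ebarN r N π i a))
        - (N:ℝ) * np.lam a * Abar r N π a := by
    rw [GN, mul_div_cancel₀ _ (ne_of_gt (hNpos hstat hQ hN)), Abar]
    have he : ∀ i : Fin r, (N:ℝ) * ebarN r N π i a = ∑ x ∈ SN r N, π x * (x.1 i a : ℝ) := by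
      intro i; rw [ebarN, mul_div_cancel₀ _ (ne_of_gt (hNpos hstat hQ hN))]
    simp only [he, Finset.mul_sum]
    rw [Finset.sum_comm (s := Finset.univ.filter (fun i => i ≠ a)) (t := SN r N)]
    rw [← Finset.sum_add_distrib, ← Finset.sum_sub_distrib]
    refine Finset.sum_congr rfl fun x _ => ?_
    rw [mul_sub, mul_add, Finset.mul_sum, Finset.mul_sum]
    congr 1
    · congr 1
      exact Finset.sum_congr rfl fun i _ => by ring
    · split_ifs <;> ring
  rw [e1] at h
  have hN0 : (N:ℝ) ≠ 0 := ne_of_gt (hNpos hstat hQ hN)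
  have hs : ∑ i ∈ Finset.univ.filter (fun i => i ≠ a), np.mu i a * ((N:ℝ) * ebarN r N π i a)
      = (N:ℝ) * ∑ i ∈ Finset.univ.filter (fun i => i ≠ a), np.mu i a * ebarN r N π i a := by
    rw [Finset.mul_sum]
    exact Finset.sum_congr rfl fun i _ => by ring
  rw [hs] at h
  have e3 : (N:ℝ) * (np.lam a * Abar r N π a)
      = (N:ℝ) * (GN np Q N π a a
        + ∑ k ∈ Finset.univ.filter (fun k => k ≠ a), np.mu k a * ebarN r N π k a) := by
    linear_combination -h
  exact mul_left_cancel₀ hN0 e3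

lemma GN_nonneg (a b : Fin r) : 0 ≤ GN np Q N π a b := by
  rw [GN]
  refine div_nonneg (Finset.sum_nonneg fun x hx => mul_nonneg (hstat.1 x)
    (Finset.sum_nonneg fun i _ => ?_)) (hNpos hstat hQ hN).le
  have h1 := (np.mu_pos i a).le
  have h2 := (Qx_routing Q N hQ hN (totalCars_of_mem_SN hx)).1 a b
  positivity

lemma GN_rowsum (a : Fin r) : ∑ b, GN np Q N π a b = DN np N π a := by
  rw [DN]
  have hN0 : (N:ℝ) ≠ 0 := ne_of_gt (hNpos hstat hQ hN)
  simp only [GN, fbarN]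
  rw [← Finset.sum_div]
  have hr : ∑ b, ∑ x ∈ SN r N, π x * ∑ i, np.mu i a * (x.2 i a : ℝ)
        * Q (scale N x.1) (scale N x.2) a b
      = ∑ x ∈ SN r N, π x * ∑ i, np.mu i a * (x.2 i a : ℝ) := by
    rw [Finset.sum_comm]
    refine Finset.sum_congr rfl fun x hx => ?_
    rw [← Finset.mul_sum]
    congr 1
    rw [Finset.sum_comm]
    refine Finset.sum_congr rfl fun i _ => ?_
    rw [← Finset.mul_sum, (Qx_routing Q N hQ hN (totalCars_of_mem_SN hx)).2 a, mul_one]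
  rw [hr]
  have : ∀ k : Fin r, np.mu k a * ((∑ x ∈ SN r N, π x * (x.2 k a : ℝ)) / N)
      = (∑ x ∈ SN r N, np.mu k a * (π x * (x.2 k a : ℝ))) / N := by
    intro k; rw [← mul_div_assoc, Finset.mul_sum]
  simp only [this]
  rw [← Finset.sum_div]
  congr 1
  rw [Finset.sum_comm]
  refine Finset.sum_congr rfl fun x _ => ?_
  rw [Finset.mul_sum]
  exact Finset.sum_congr rfl fun i _ => by ring

lemma qN_routing : IsRouting (qN np Q N π) := by
  constructor
  · intro a b
    rw [qN]
    split_ifs with h1 h2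
    · norm_num
    · norm_num
    · have hD : 0 ≤ DN np N π a := by
        rw [← GN_rowsum hstat hQ hN a]
        exact Finset.sum_nonneg fun b _ => GN_nonneg hstat hQ hN a b
      exact div_nonneg (GN_nonneg hstat hQ hN a b) hD
  · intro a
    by_cases hD : DN np N π a = 0
    · simp only [qN, hD, if_true, eq_self_iff_true]
      simp [Finset.sum_ite_eq Finset.univ a]
    · simp only [qN, hD, if_false]
      rw [← Finset.sum_div, GN_rowsum hstat hQ hN a, div_self hD]

lemma GN_eq_qD (a b : Fin r) : GN np Q N π a b = qN np Q N π a b * DN np N π a := by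
  by_cases h1 : DN np N π a = 0
  · have hsum := GN_rowsum hstat hQ hN a
    rw [h1] at hsum
    have hz : GN np Q N π a b = 0 := by
      have hle : GN np Q N π a b ≤ ∑ b', GN np Q N π a b' :=
        Finset.single_le_sum (fun b' _ => GN_nonneg hstat hQ hN a b') (Finset.mem_univ b)
      have := GN_nonneg hstat hQ hN a b
      linarith
    rw [qN, if_pos h1, hz, h1, mul_zero]
  · rw [qN, if_neg h1, div_mul_cancel₀ _ h1]

end Identities
end S1

namespace S1
variable {r : ℕ} {np : NetParams r} {Q : Mat r → Mat r → Mat r} {N : ℕ} {π : NState r → ℝ}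

lemma entry_le_sum_real (g : Fin r → Fin r → ℝ) (hg : ∀ i j, 0 ≤ g i j) (a b : Fin r) :
    g a b ≤ ∑ i, ∑ j, g i j := by
  refine le_trans (Finset.single_le_sum (f := fun j => g a j)
    (fun j _ => hg a j) (Finset.mem_univ b)) ?_
  exact Finset.single_le_sum (f := fun i => ∑ j, g i j)
    (fun i _ => Finset.sum_nonneg fun j _ => hg i j) (Finset.mem_univ a)

section Bars
variable (hstat : CtmcIsStationary np Q N π)
  (hQ : ∀ e f : Mat r, MemT e f → IsRouting (Q e f)) (hN : 1 ≤ N)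
include hstat hN

lemma bar_nonneg (a b : Fin r) : 0 ≤ ebarN r N π a b ∧ 0 ≤ fbarN r N π a b := by
  have hNp : (0:ℝ) < N := by exact_mod_cast Nat.lt_of_lt_of_le Nat.zero_lt_one hN
  constructor <;>
  · refine div_nonneg (Finset.sum_nonneg fun x _ => mul_nonneg (hstat.1 x) ?_) hNp.le
    positivity

lemma bar_total : (∑ i, ∑ j, (ebarN r N π i j + fbarN r N π i j)) = 1 := by
  have hNp : (0:ℝ) < N := by exact_mod_cast Nat.lt_of_lt_of_le Nat.zero_lt_one hN
  have h1 : ∀ i j : Fin r, ebarN r N π i j + fbarN r N π i j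
      = (∑ x ∈ SN r N, π x * ((x.1 i j + x.2 i j : ℕ):ℝ)) / N := by
    intro i j
    rw [ebarN, fbarN, ← add_div]
    congr 1
    rw [← Finset.sum_add_distrib]
    refine Finset.sum_congr rfl fun x _ => ?_
    push_cast; ring
  simp only [h1, ← Finset.sum_div]
  rw [div_eq_one_iff_eq (ne_of_gt hNp)]
  have h2 : ∑ i, ∑ j, ∑ x ∈ SN r N, π x * ((x.1 i j + x.2 i j : ℕ):ℝ)
      = ∑ x ∈ SN r N, π x * ((totalCars x : ℕ) : ℝ) := by
    calc ∑ i, ∑ j, ∑ x ∈ SN r N, π x * ((x.1 i j + x.2 i j : ℕ):ℝ)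
        = ∑ i, ∑ x ∈ SN r N, ∑ j, π x * ((x.1 i j + x.2 i j : ℕ):ℝ) :=
          Finset.sum_congr rfl fun i _ => Finset.sum_comm
      _ = ∑ x ∈ SN r N, ∑ i, ∑ j, π x * ((x.1 i j + x.2 i j : ℕ):ℝ) := Finset.sum_comm
      _ = ∑ x ∈ SN r N, π x * ((totalCars x : ℕ) : ℝ) := by
          refine Finset.sum_congr rfl fun x _ => ?_
          simp only [← Finset.mul_sum]
          rw [cast_total]
  rw [h2]
  have h3 : ∀ x ∈ SN r N, π x * ((totalCars x : ℕ) : ℝ) = π x * N := by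
    intro x hx; rw [totalCars_of_mem_SN hx]
  rw [Finset.sum_congr rfl h3, ← Finset.sum_mul, sum_pi_one hstat, one_mul]

lemma bar_le_one (a b : Fin r) : ebarN r N π a b ≤ 1 ∧ fbarN r N π a b ≤ 1 := by
  have hNp : (0:ℝ) < N := by exact_mod_cast Nat.lt_of_lt_of_le Nat.zero_lt_one hN
  have key : ∀ (M : NState r → CMat r), (∀ x i j, M x i j ≤ totalCars x) →
      (∑ x ∈ SN r N, π x * (M x a b : ℝ)) / N ≤ 1 := by
    intro M hM
    rw [div_le_one hNp]
    calc ∑ x ∈ SN r N, π x * (M x a b : ℝ) ≤ ∑ x ∈ SN r N, π x * N := by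
          refine Finset.sum_le_sum fun x hx => ?_
          refine mul_le_mul_of_nonneg_left ?_ (hstat.1 x)
          have := hM x a b
          have h2 := totalCars_of_mem_SN hx
          exact_mod_cast h2 ▸ this
      _ = (N:ℝ) := by rw [← Finset.sum_mul, sum_pi_one hstat, one_mul]
  exact ⟨key (fun x => x.1) (fun x i j => (entry_le_total x i j).1),
    key (fun x => x.2) (fun x i j => (entry_le_total x i j).2)⟩

lemma memT_bar : MemT (ebarN r N π) (fbarN r N π) :=
  ⟨fun i j => ⟨(bar_nonneg hstat hN i j).1, (bar_le_one hstat hN i j).1⟩,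
   fun i j => ⟨(bar_nonneg hstat hN i j).2, (bar_le_one hstat hN i j).2⟩,
   bar_total hstat hN⟩

lemma probOf_eq_Abar (a : Fin r) : probOf π {x | 0 < x.1 a a} = Abar r N π a := by
  rw [probOf]
  rw [tsum_eq_sum (s := SN r N) (fun x hx => by
    rw [Set.indicator_apply]
    split_ifs
    · exact pi_zero_off hstat x hx
    · rfl)]
  refine Finset.sum_congr rfl fun x _ => ?_
  simp only [Set.indicator_apply, Set.mem_setOf_eq]
  split_ifs <;> ring

lemma ebar_diag_pos (a : Fin r) (ha : 0 < Abar r N π a) : 0 < ebarN r N π a a := by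
  have hNp : (0:ℝ) < N := by exact_mod_cast Nat.lt_of_lt_of_le Nat.zero_lt_one hN
  obtain ⟨x, hxS, hx⟩ : ∃ x ∈ SN r N, 0 < π x * (if 0 < x.1 a a then (1:ℝ) else 0) := by
    by_contra h
    push_neg at h
    have : Abar r N π a ≤ 0 := Finset.sum_nonpos fun x hx => h x hx
    linarith
  have hxpos : 0 < π x := by
    by_contra h
    push_neg at h
    have : π x = 0 := le_antisymm h (hstat.1 x)
    rw [this, zero_mul] at hx
    exact lt_irrefl 0 hx
  have hxa : 0 < x.1 a a := by
    by_contra h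
    rw [if_neg h, mul_zero] at hx
    exact lt_irrefl 0 hx
  rw [ebarN]
  refine div_pos ?_ hNp
  calc (0:ℝ) < π x * (x.1 a a : ℝ) := mul_pos hxpos (by exact_mod_cast hxa)
    _ ≤ ∑ y ∈ SN r N, π y * (y.1 a a : ℝ) :=
      Finset.single_le_sum (f := fun y => π y * (y.1 a a : ℝ))
        (fun y _ => mul_nonneg (hstat.1 y) (by positivity)) hxS

end Bars
end S1

namespace S1
variable {r : ℕ}

lemma objU_pos (np : NetParams r) (c : Mat r) (hc : ∀ i j, 0 < c i j)
    (A : Fin r → ℝ) (hA : ∀ i, 0 ≤ A i) (a0 : Fin r) (ha0 : 0 < A a0) :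
    0 < objU np c A := by
  obtain ⟨j0, hj0⟩ : ∃ j, 0 < np.P a0 j := by
    by_contra h
    push_neg at h
    have hz : ∀ j, np.P a0 j = 0 := fun j => le_antisymm (h j) (np.P_nonneg a0 j)
    have hs := np.P_rowsum a0
    simp only [hz, Finset.sum_const_zero] at hs
    norm_num at hs
  rw [objU]
  have hterm : 0 < A a0 * np.lam a0 * np.P a0 j0 * c a0 j0 := by
    have := np.lam_pos a0; have := hc a0 j0
    positivity
  refine lt_of_lt_of_le hterm
    (entry_le_sum_real (fun i j => A i * np.lam i * np.P i j * c i j) (fun i j => ?_) a0 j0)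
  have := (np.lam_pos i).le; have := np.P_nonneg i j; have := (hc i j).le; have := hA i
  positivity

/-- The improvement lemma: a relaxed-feasible solution with all `a i < 1`,
some `a a0 > 0` and `e a0 a0 > 0` can be strictly improved to a feasible one. -/
lemma improve (np : NetParams r) (c : Mat r) (hc : ∀ i j, 0 < c i j)
    (q e f : Mat r) (A : Fin r → ℝ)
    (hq : IsRouting q)
    (h2 : ∀ i j, np.lam i * np.P i j * A i = np.mu i j * f i j)
    (h3 : ∀ i j, i ≠ j → np.mu i j * e i j = q i j * ∑ k, np.mu k i * f k i)
    (h4 : ∀ i, np.lam i * A i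
      = (∑ k ∈ Finset.univ.filter (fun k => k ≠ i), np.mu k i * e k i)
        + q i i * ∑ k, np.mu k i * f k i)
    (hT : MemT e f)
    (hA0 : ∀ i, 0 ≤ A i) (hA1 : ∀ i, A i < 1)
    (a0 : Fin r) (ha0 : 0 < A a0) (hS0 : 0 < e a0 a0) :
    ∃ q' e' f' A', FluidFeasible np q' e' f' A' ∧ objU np c A < objU np c A' := by
  classical
  -- the maximiser of A
  obtain ⟨i0, _, hi0max⟩ := Finset.exists_max_image Finset.univ A ⟨a0, Finset.mem_univ a0⟩
  set α := A i0 with hα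
  have hαpos : 0 < α := lt_of_lt_of_le ha0 (hi0max a0 (Finset.mem_univ a0))
  have hαlt : α < 1 := hA1 i0
  -- diagonal mass and the rest
  set S := ∑ i, e i i with hSdef
  have hSpos : 0 < S :=
    lt_of_lt_of_le hS0 (Finset.single_le_sum (f := fun i => e i i)
      (fun i _ => (hT.1 i i).1) (Finset.mem_univ a0))
  set M := 1 - S with hMdef
  have hdiag : (∑ i, ∑ j, if i = j then e i j else 0) = S := by
    refine Finset.sum_congr rfl fun i _ => ?_
    simp [Finset.sum_ite_eq Finset.univ i]
  have hMpos : 0 < M := by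
    -- M ≥ f a0 j0 > 0 for some j0 with P a0 j0 > 0
    obtain ⟨j0, hj0⟩ : ∃ j, 0 < np.P a0 j := by
      by_contra h
      push_neg at h
      have hz : ∀ j, np.P a0 j = 0 := fun j => le_antisymm (h j) (np.P_nonneg a0 j)
      have hs := np.P_rowsum a0
      simp only [hz, Finset.sum_const_zero] at hs
      norm_num at hs
    have hf0 : 0 < f a0 j0 := by
      have h := h2 a0 j0
      have hμ := np.mu_pos a0 j0
      have hl := np.lam_pos a0
      have hpos : 0 < np.mu a0 j0 * f a0 j0 := by rw [← h]; positivity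
      by_contra hcon
      push_neg at hcon
      nlinarith [mul_nonpos_of_nonneg_of_nonpos hμ.le hcon]
    have hle : S + f a0 j0 ≤ 1 := by
      have hterm : ∀ i j : Fin r, (if i = j then e i j else 0)
          + (if i = a0 ∧ j = j0 then f i j else 0) ≤ e i j + f i j := by
        intro i j
        have he := (hT.1 i j).1
        have hf := (hT.2.1 i j).1
        split_ifs <;> simp <;> nlinarith
      calc S + f a0 j0
          = (∑ i, ∑ j, if i = j then e i j else 0)
            + (∑ i, ∑ j, if i = a0 ∧ j = j0 then f i j else 0) := by
            rw [hdiag, sum_ite_pair_real]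
        _ = ∑ i, ∑ j, ((if i = j then e i j else 0)
              + (if i = a0 ∧ j = j0 then f i j else 0)) := by
            simp [Finset.sum_add_distrib]
        _ ≤ ∑ i, ∑ j, (e i j + f i j) :=
            Finset.sum_le_sum fun i _ => Finset.sum_le_sum fun j _ => hterm i j
        _ = 1 := hT.2.2
    linarith
  have hM1 : M < 1 := by linarith
  -- the scaling factor
  set θ := min (1 / M) (1 / α) with hθdef
  have hθ1 : 1 < θ := by
    rw [hθdef, lt_min_iff]
    constructor
    · rw [lt_div_iff₀ hMpos]; linarith
    · rw [lt_div_iff₀ hαpos]; linarith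
  have hθM : θ * M ≤ 1 := by
    have h := min_le_left (1 / M) (1 / α)
    calc θ * M ≤ (1 / M) * M := mul_le_mul_of_nonneg_right h hMpos.le
      _ = 1 := by field_simp
  have hθα : ∀ i, θ * A i ≤ 1 := by
    intro i
    have h := min_le_right (1 / M) (1 / α)
    calc θ * A i ≤ (1 / α) * α :=
        mul_le_mul (le_trans h le_rfl) (hi0max i (Finset.mem_univ i)) (hA0 i)
          (by positivity)
      _ = 1 := by field_simp
  have hθpos : 0 < θ := lt_trans zero_lt_one hθ1
  set R := 1 - θ * M with hRdef
  have hR0 : 0 ≤ R := by rw [hRdef]; linarith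
  -- the improved solution
  refine ⟨q, (fun i j => if i = j then (if i = i0 then R else 0) else θ * e i j),
    (fun i j => θ * f i j), (fun i => θ * A i), ?_, ?_⟩
  have hsumf : ∀ i : Fin r, (∑ k, np.mu k i * (θ * f k i)) = θ * ∑ k, np.mu k i * f k i := by
    intro i
    rw [Finset.mul_sum]
    exact Finset.sum_congr rfl fun k _ => by ring
  have hper : ∀ i j : Fin r,
      (if i = j then (if i = i0 then R else 0) else θ * e i j) + θ * f i j
      = θ * (e i j + f i j) - (if i = j then θ * e i j else 0)
        + (if i = i0 ∧ j = i0 then R else 0) := by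
    intro i j
    by_cases hij : i = j
    · subst hij
      by_cases hii0 : i = i0
      · subst hii0
        simp only [if_pos rfl, and_self, if_pos trivial]
        ring
      · rw [if_pos rfl, if_neg hii0, if_pos rfl,
          if_neg (fun h => hii0 (h : i = i0 ∧ i = i0).1)]
        ring
    · have hc2 : ¬(i = i0 ∧ j = i0) := fun ⟨u, v⟩ => hij (u.trans v.symm)
      rw [if_neg hij, if_neg hij, if_neg hc2]
      ring
  have htot : (∑ i, ∑ j, ((if i = j then (if i = i0 then R else 0) else θ * e i j)
      + θ * f i j)) = 1 := by
    simp only [hper]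
    have hT1 : ∑ i, ∑ j, θ * (e i j + f i j) = θ := by
      simp only [← Finset.mul_sum]
      rw [hT.2.2, mul_one]
    have hT2 : (∑ i, ∑ j, if i = j then θ * e i j else 0) = θ * S := by
      have : ∀ i : Fin r, (∑ j, if i = j then θ * e i j else 0) = θ * e i i := by
        intro i
        rw [Finset.sum_ite_eq Finset.univ i (fun j => θ * e i j),
          if_pos (Finset.mem_univ i)]
      simp only [this, ← Finset.mul_sum, ← hSdef]
    have hT3 : (∑ i, ∑ j, if i = i0 ∧ j = i0 then R else 0) = R :=
      sum_ite_pair_real i0 i0 (fun _ _ => R)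
    calc (∑ i, ∑ j, ((θ * (e i j + f i j) - if i = j then θ * e i j else 0)
          + if i = i0 ∧ j = i0 then R else 0))
        = (∑ i, ∑ j, θ * (e i j + f i j)) - (∑ i, ∑ j, if i = j then θ * e i j else 0)
          + (∑ i, ∑ j, if i = i0 ∧ j = i0 then R else 0) := by
          simp only [Finset.sum_add_distrib, Finset.sum_sub_distrib]
      _ = θ - θ * S + R := by rw [hT1, hT2, hT3]
      _ = 1 := by rw [hRdef, hMdef]; ring
  have hnn : ∀ i j : Fin r, 0 ≤ (if i = j then (if i = i0 then R else 0) else θ * e i j)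
      + θ * f i j := by
    intro i j
    have he := (hT.1 i j).1
    have hf := (hT.2.1 i j).1
    have := hθpos.le
    split_ifs <;> positivity
  have hEnn : ∀ i j : Fin r,
      0 ≤ (if i = j then (if i = i0 then R else 0) else θ * e i j) := by
    intro i j
    have he := (hT.1 i j).1
    have := hθpos.le
    split_ifs <;> positivity
  have hFnn : ∀ i j : Fin r, (0:ℝ) ≤ θ * f i j := by
    intro i j
    have hf := (hT.2.1 i j).1
    positivity
  refine ⟨hq, ?_, ?_, ?_, ?_, ⟨?_, ?_, htot⟩, ?_⟩
  · intro i j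
    have := h2 i j
    show np.lam i * np.P i j * (θ * A i) = np.mu i j * (θ * f i j)
    linear_combination θ * this
  · intro i j hij
    show np.mu i j * (if i = j then (if i = i0 then R else 0) else θ * e i j)
        = q i j * ∑ k, np.mu k i * (θ * f k i)
    rw [if_neg hij, hsumf i]
    linear_combination θ * h3 i j hij
  · intro i
    show np.lam i * (θ * A i) = (∑ k ∈ Finset.univ.filter (fun k => k ≠ i),
        np.mu k i * (if k = i then (if k = i0 then R else 0) else θ * e k i))
      + q i i * ∑ k, np.mu k i * (θ * f k i)
    have he : (∑ k ∈ Finset.univ.filter (fun k => k ≠ i),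
        np.mu k i * (if k = i then (if k = i0 then R else 0) else θ * e k i))
        = θ * ∑ k ∈ Finset.univ.filter (fun k => k ≠ i), np.mu k i * e k i := by
      rw [Finset.mul_sum]
      refine Finset.sum_congr rfl fun k hk => ?_
      rw [if_neg (Finset.mem_filter.1 hk).2]
      ring
    rw [he, hsumf i]
    linear_combination θ * h4 i
  · intro i
    show (1 - θ * A i) * (if i = i then (if i = i0 then R else 0) else θ * e i i) = 0
    rw [if_pos rfl]
    by_cases hii0 : i = i0
    · rw [if_pos hii0, hii0]
      rcases le_total (1 / M) (1 / α) with hcmp | hcmp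
      · have hR : R = 0 := by
          rw [hRdef, hθdef, min_eq_left hcmp]
          field_simp
          norm_num
        rw [hR, mul_zero]
      · have hA1' : θ * A i0 = 1 := by
          rw [hθdef, min_eq_right hcmp, ← hα]
          field_simp
        rw [hA1', sub_self, zero_mul]
    · rw [if_neg hii0, mul_zero]
  · exact fun i j => ⟨hEnn i j, by
      calc (if i = j then (if i = i0 then R else 0) else θ * e i j)
          ≤ (if i = j then (if i = i0 then R else 0) else θ * e i j) + θ * f i j := by
            have := hFnn i j; linarith
        _ ≤ ∑ i', ∑ j', ((if i' = j' then (if i' = i0 then R else 0) else θ * e i' j')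
              + θ * f i' j') := entry_le_sum_real _ hnn i j
        _ = 1 := htot⟩
  · exact fun i j => ⟨hFnn i j, by
      calc θ * f i j
          ≤ (if i = j then (if i = i0 then R else 0) else θ * e i j) + θ * f i j := by
            have := hEnn i j; linarith
        _ ≤ ∑ i', ∑ j', ((if i' = j' then (if i' = i0 then R else 0) else θ * e i' j')
              + θ * f i' j') := entry_le_sum_real _ hnn i j
        _ = 1 := htot⟩
  · exact fun i => ⟨mul_nonneg hθpos.le (hA0 i), hθα i⟩
  · have hobj : objU np c (fun i => θ * A i) = θ * objU np c A := by
      rw [objU, objU, Finset.mul_sum]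
      refine Finset.sum_congr rfl fun i _ => ?_
      rw [Finset.mul_sum]
      exact Finset.sum_congr rfl fun j _ => by ring
    rw [hobj]
    have hpos := objU_pos np c hc A hA0 a0 ha0
    nlinarith

end S1
/-- Theorem 2(a): for any (possibly state-dependent) routing policy under which
the `N`-car CTMC has a unique stationary distribution, the steady-state utility
is strictly smaller than the optimal value of the fluid-based optimization. -/
theorem stmt_1 {r : ℕ} (hr : 1 ≤ r) (np : NetParams r)
    (c : Mat r) (hc : ∀ i j, 0 < c i j)
    (Q : Mat r → Mat r → Mat r)
    (hQ : ∀ e f : Mat r, MemT e f → IsRouting (Q e f))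
    (N : ℕ) (hN : 1 ≤ N)
    (π : NState r → ℝ) (hstat : CtmcIsStationary np Q N π)
    (huniq : ∀ π' : NState r → ℝ, CtmcIsStationary np Q N π' → π' = π)
    (qs ebar fbar : Mat r) (abar : Fin r → ℝ)
    (hfeas : FluidFeasible np qs ebar fbar abar)
    (hopt : ∀ (q' e' f' : Mat r) (a' : Fin r → ℝ),
      FluidFeasible np q' e' f' a' → objU np c a' ≤ objU np c abar) :
    (∑ i, ∑ j, probOf π {x | 0 < x.1 i i} * np.lam i * np.P i j * c i j)
      < objU np c abar := by
  classical
  have hLHS : (∑ i, ∑ j, probOf π {x | 0 < x.1 i i} * np.lam i * np.P i j * c i j)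
      = objU np c (S1.Abar r N π) := by
    rw [objU]
    refine Finset.sum_congr rfl fun i _ => Finset.sum_congr rfl fun j _ => ?_
    rw [S1.probOf_eq_Abar hstat hN i]
  rw [hLHS]
  obtain ⟨hq, h2, h3, h4, h5, hT, ha⟩ := hfeas
  by_cases hall : ∀ i, S1.Abar r N π i = 0
  · have hz : objU np c (S1.Abar r N π) = 0 := by
      rw [objU]
      refine Finset.sum_eq_zero fun i _ => Finset.sum_eq_zero fun j _ => ?_
      rw [hall i]; ring
    rw [hz]
    by_cases habar : ∀ i, abar i = 0
    · exfalso
      have hf : ∀ i j, fbar i j = 0 := by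
        intro i j
        have hh := h2 i j
        rw [habar i, mul_zero] at hh
        have hμ := np.mu_pos i j
        rcases mul_eq_zero.1 hh.symm with h0 | h0
        · exact absurd h0 (ne_of_gt hμ)
        · exact h0
      have he : ∀ i j, ebar i j = 0 := by
        intro i j
        by_cases hij : i = j
        · subst hij
          have hh := h5 i
          rw [habar i, sub_zero, one_mul] at hh
          exact hh
        · have hh := h3 i j hij
          simp only [hf, mul_zero, Finset.sum_const_zero] at hh
          have hμ := np.mu_pos i j
          rcases mul_eq_zero.1 hh with h0 | h0
          · exact absurd h0 (ne_of_gt hμ)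
          · exact h0
      have := hT.2.2
      simp only [he, hf, add_zero, Finset.sum_const_zero] at this
      norm_num at this
    · push_neg at habar
      obtain ⟨i, hi⟩ := habar
      exact S1.objU_pos np c hc abar (fun i => (ha i).1) i
        (lt_of_le_of_ne (ha i).1 (Ne.symm hi))
  · push_neg at hall
    obtain ⟨a0, ha0ne⟩ := hall
    have ha0 : 0 < S1.Abar r N π a0 :=
      lt_of_le_of_ne (S1.Abar_nonneg hstat a0) (Ne.symm ha0ne)
    have hq' := S1.qN_routing hstat hQ hN
    have h2' : ∀ i j, np.lam i * np.P i j * S1.Abar r N π i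
        = np.mu i j * S1.fbarN r N π i j := S1.L1 hstat hQ hN
    have h3' : ∀ i j, i ≠ j → np.mu i j * S1.ebarN r N π i j
        = S1.qN np Q N π i j * ∑ k, np.mu k i * S1.fbarN r N π k i := by
      intro i j hij
      rw [S1.L2 hstat hQ hN i j hij, S1.GN_eq_qD hstat hQ hN i j]
      rfl
    have h4' : ∀ i, np.lam i * S1.Abar r N π i
        = (∑ k ∈ Finset.univ.filter (fun k => k ≠ i), np.mu k i * S1.ebarN r N π k i)
          + S1.qN np Q N π i i * ∑ k, np.mu k i * S1.fbarN r N π k i := by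
      intro i
      have hL3 := S1.L3 hstat hQ hN i
      have hGq := S1.GN_eq_qD hstat hQ hN i i
      rw [hGq] at hL3
      rw [hL3]
      have : S1.DN np N π i = ∑ k, np.mu k i * S1.fbarN r N π k i := rfl
      rw [this]
      ring
    obtain ⟨q', e', f', A', hfeas', hlt⟩ := S1.improve np c hc
      (S1.qN np Q N π) (S1.ebarN r N π) (S1.fbarN r N π) (S1.Abar r N π)
      hq' h2' h3' h4' (S1.memT_bar hstat hN)
      (S1.Abar_nonneg hstat) (S1.Abar_lt_one hstat hQ hN)
      a0 ha0 (S1.ebar_diag_pos hstat hN a0 ha0)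
    exact lt_of_lt_of_le hlt (hopt q' e' f' A' hfeas')
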